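/- Suppose v > 0 and for each period L let E_L = 2·cosh ξ_L with ξ_L > 0 satisfy 2·cosh(L ξ_L) - v·sinh(L ξ_L)/sinh(ξ_L) = 2·cos κ for some fixed κ ∈ [0, π]. Then E_L → √(4 + v²) as L → ∞. -/

import Mathlib

open Real Filter

lemma sinh_le_mul_cosh_aux {x : ℝ} (hx : 0 ≤ x) : Real.sinh x ≤ x * Real.cosh x := by
  have key : ∀ y : ℝ, HasDerivAt (fun t => t * Real.cosh t - Real.sinh t) (y * Real.sinh y) y := by
    intro y
    have h1 := (hasDerivAt_id y).mul (Real.hasDerivAt_cosh y)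
    have h2 := Real.hasDerivAt_sinh y
    have h3 := h1.sub h2
    refine h3.congr_deriv ?_
    simp [id, mul_comm]
  have hmono : MonotoneOn (fun t => t * Real.cosh t - Real.sinh t) (Set.Ici 0) := by
    apply monotoneOn_of_deriv_nonneg (convex_Ici 0)
    · exact (Continuous.sub (continuous_id.mul Real.continuous_cosh) Real.continuous_sinh).continuousOn
    · exact fun y _ => ((key y).differentiableAt).differentiableWithinAt
    · intro y hy
      rw [(key y).deriv]
      rw [interior_Ici] at hy
      have : (0:ℝ) < y := hy
      exact mul_nonneg this.le (Real.sinh_nonneg_iff.mpr this.le)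
  have h0 := hmono (Set.self_mem_Ici) (Set.mem_Ici.mpr hx) hx
  simpa using h0

lemma gh_eq_aux (c : ℝ) (_hc : c ≤ 1) {x : ℝ} (_hx : 0 < x) :
    Real.sinh x / (2 * Real.cosh x - 2 * c)
      = (1 - Real.exp (-(2*x))) / (2 + 2 * Real.exp (-(2*x)) - 4 * c * Real.exp (-x)) := by
  have ha : Real.exp (-x) * Real.exp x = 1 := by rw [← Real.exp_add]; simp
  have hb : Real.exp (-x) * Real.exp (-x) = Real.exp (-(2*x)) := by
    rw [← Real.exp_add]; ring_nf
  have hE : 0 < Real.exp (-x) := Real.exp_pos _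
  have hnum : 1 - Real.exp (-(2*x)) = (2 * Real.exp (-x)) * Real.sinh x := by
    rw [Real.sinh_eq]; linear_combination (-1)*ha + hb
  have hden : 2 + 2 * Real.exp (-(2*x)) - 4 * c * Real.exp (-x)
      = (2 * Real.exp (-x)) * (2 * Real.cosh x - 2 * c) := by
    rw [Real.cosh_eq]; linear_combination (-2)*ha + (-2)*hb
  rw [hnum, hden, mul_div_mul_left _ _ (by positivity : (2 * Real.exp (-x)) ≠ 0)]

theorem floquet_eigenvalue_outside_band_limit (v : ℝ) (hv : 0 < v)
    (κ : ℝ) (hκ : κ ∈ Set.Icc 0 Real.pi) (ξ : ℕ → ℝ) (hξ : ∀ L, 0 < ξ L)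
    (heq : ∀ L : ℕ, 1 ≤ L →
      2 * Real.cosh (L * ξ L) - v * Real.sinh (L * ξ L) / Real.sinh (ξ L)
        = 2 * Real.cos κ) :
    Tendsto (fun L : ℕ => 2 * Real.cosh (ξ L)) atTop (nhds (Real.sqrt (4 + v ^ 2))) := by
  have hcos : Real.cos κ ≤ 1 := Real.cos_le_one κ
  -- positivity facts
  have hxpos : ∀ L : ℕ, 1 ≤ L → 0 < (L : ℝ) * ξ L := fun L hL =>
    mul_pos (by exact_mod_cast Nat.pos_of_ne_zero (by omega)) (hξ L)
  have hDpos : ∀ L : ℕ, 1 ≤ L → 0 < 2 * Real.cosh ((L:ℝ) * ξ L) - 2 * Real.cos κ := by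
    intro L hL
    have h1 : 1 < Real.cosh ((L:ℝ) * ξ L) := by
      rw [Real.one_lt_cosh]; exact (hxpos L hL).ne'
    linarith
  -- key identity
  have key : ∀ L : ℕ, 1 ≤ L → Real.sinh (ξ L)
      = v * Real.sinh ((L:ℝ) * ξ L) / (2 * Real.cosh ((L:ℝ) * ξ L) - 2 * Real.cos κ) := by
    intro L hL
    have hs : 0 < Real.sinh (ξ L) := Real.sinh_pos_iff.mpr (hξ L)
    have h := heq L hL
    rw [eq_div_iff (hDpos L hL).ne']
    field_simp at h ⊢
    nlinarith [h, hs]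
  -- L * ξ L → ∞
  have hLxi : Tendsto (fun L : ℕ => (L:ℝ) * ξ L) atTop atTop := by
    rw [tendsto_atTop]
    intro M
    set M' : ℝ := max M 1 with hM'
    have hM1 : (1:ℝ) ≤ M' := le_max_right _ _
    set C : ℝ := (2 * Real.cosh M' - 2 * Real.cos κ) * Real.cosh M' / v with hC
    filter_upwards [eventually_ge_atTop (max 1 (⌈C⌉₊ + 1))] with L hL
    have hL1 : 1 ≤ L := le_trans (le_max_left _ _) hL
    have hLC : C < (L:ℝ) := by
      have h1 : (⌈C⌉₊ + 1 : ℕ) ≤ L := le_trans (le_max_right _ _) hL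
      have h2 : C ≤ (⌈C⌉₊ : ℝ) := Nat.le_ceil C
      have h3 : ((⌈C⌉₊ + 1 : ℕ) : ℝ) ≤ (L:ℝ) := by exact_mod_cast h1
      push_cast at h3
      linarith
    by_contra hcon
    push_neg at hcon
    have hxM : (L:ℝ) * ξ L ≤ M' := le_trans hcon.le (le_max_left _ _)
    have hx0 : 0 < (L:ℝ) * ξ L := hxpos L hL1
    -- lower bound on sinh ξ
    have hM'pos : (0:ℝ) < M' := lt_of_lt_of_le one_pos hM1
    have hDle : 2 * Real.cosh ((L:ℝ) * ξ L) - 2 * Real.cos κ ≤ 2 * Real.cosh M' - 2 * Real.cos κ := by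
      have : Real.cosh ((L:ℝ) * ξ L) ≤ Real.cosh M' := Real.cosh_le_cosh.mpr
        (by rw [abs_of_pos hx0, abs_of_pos hM'pos]; exact hxM)
      linarith
    have hsinhx : (L:ℝ) * ξ L ≤ Real.sinh ((L:ℝ) * ξ L) := Real.self_le_sinh_iff.mpr hx0.le
    have hlow : v * ((L:ℝ) * ξ L) / (2 * Real.cosh M' - 2 * Real.cos κ) ≤ Real.sinh (ξ L) := by
      rw [key L hL1]
      apply div_le_div₀ (by positivity)
        (by nlinarith) (hDpos L hL1) hDle
    -- upper bound on sinh ξ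
    have hξM : ξ L ≤ M' := by
      have : ξ L ≤ (L:ℝ) * ξ L := le_mul_of_one_le_left (hξ L).le (by exact_mod_cast hL1)
      linarith
    have hup : Real.sinh (ξ L) ≤ ξ L * Real.cosh M' := by
      calc Real.sinh (ξ L) ≤ ξ L * Real.cosh (ξ L) := sinh_le_mul_cosh_aux (hξ L).le
        _ ≤ ξ L * Real.cosh M' := by
            apply mul_le_mul_of_nonneg_left _ (hξ L).le
            exact Real.cosh_le_cosh.mpr (by rw [abs_of_pos (hξ L), abs_of_pos hM'pos]; exact hξM)
    -- contradiction
    have hD'pos : 0 < 2 * Real.cosh M' - 2 * Real.cos κ := by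
      have : 1 < Real.cosh M' := by rw [Real.one_lt_cosh]; positivity
      linarith
    have hch : 0 < Real.cosh M' := Real.cosh_pos M'
    have : (L:ℝ) ≤ C := by
      rw [hC, le_div_iff₀ hv]
      have h := le_trans hlow hup
      rw [div_le_iff₀ hD'pos] at h
      have := hξ L
      nlinarith
    linarith
  -- limit of the exponential expression
  have hhlim : Tendsto (fun x : ℝ =>
      (1 - Real.exp (-(2*x))) / (2 + 2 * Real.exp (-(2*x)) - 4 * Real.cos κ * Real.exp (-x)))
      atTop (nhds (1/2)) := by
    have e1 : Tendsto (fun x : ℝ => Real.exp (-x)) atTop (nhds 0) :=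
      Real.tendsto_exp_neg_atTop_nhds_zero
    have e2 : Tendsto (fun x : ℝ => Real.exp (-(2*x))) atTop (nhds 0) := by
      have : Tendsto (fun x : ℝ => (2:ℝ)*x) atTop atTop :=
        (tendsto_id.const_mul_atTop (by norm_num))
      exact (Real.tendsto_exp_neg_atTop_nhds_zero).comp this
    have hnum : Tendsto (fun x : ℝ => 1 - Real.exp (-(2*x))) atTop (nhds 1) := by
      have := (tendsto_const_nhds (x := (1:ℝ)) (f := atTop)).sub e2
      simpa using this
    have hden : Tendsto (fun x : ℝ => 2 + 2 * Real.exp (-(2*x)) - 4 * Real.cos κ * Real.exp (-x))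
        atTop (nhds 2) := by
      have := ((tendsto_const_nhds (x := (2:ℝ)) (f := atTop)).add (e2.const_mul 2)).sub
        (e1.const_mul (4 * Real.cos κ))
      simpa using this
    have := hnum.div hden (by norm_num)
    exact this
  -- sinh (ξ L) → v/2
  have hsinh : Tendsto (fun L : ℕ => Real.sinh (ξ L)) atTop (nhds (v/2)) := by
    have hcomp : Tendsto (fun L : ℕ => v * ((1 - Real.exp (-(2*((L:ℝ) * ξ L)))) /
        (2 + 2 * Real.exp (-(2*((L:ℝ) * ξ L))) - 4 * Real.cos κ * Real.exp (-((L:ℝ) * ξ L)))))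
        atTop (nhds (v * (1/2))) :=
      ((hhlim.comp hLxi).const_mul v)
    have heq' : ∀ᶠ L : ℕ in atTop, v * ((1 - Real.exp (-(2*((L:ℝ) * ξ L)))) /
        (2 + 2 * Real.exp (-(2*((L:ℝ) * ξ L))) - 4 * Real.cos κ * Real.exp (-((L:ℝ) * ξ L))))
        = Real.sinh (ξ L) := by
      filter_upwards [eventually_ge_atTop 1] with L hL
      rw [← gh_eq_aux (Real.cos κ) hcos (hxpos L hL), key L hL, mul_div_assoc]
    have := hcomp.congr' heq'
    rwa [mul_one_div] at this
  -- conclude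
  have hcosh_eq : ∀ L : ℕ, 2 * Real.cosh (ξ L) = 2 * Real.sqrt (1 + Real.sinh (ξ L) ^ 2) := by
    intro L
    congr 1
    rw [show (1 + Real.sinh (ξ L)^2) = Real.cosh (ξ L)^2 from by rw [Real.cosh_sq]; ring,
      Real.sqrt_sq (Real.cosh_pos _).le]
  have hcont : Continuous fun s : ℝ => 2 * Real.sqrt (1 + s ^ 2) := by
    exact continuous_const.mul (Real.continuous_sqrt.comp (by continuity))
  have hfinal : Tendsto (fun L : ℕ => 2 * Real.sqrt (1 + Real.sinh (ξ L) ^ 2)) atTop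
      (nhds (2 * Real.sqrt (1 + (v/2) ^ 2))) :=
    (hcont.tendsto (v/2)).comp hsinh
  have hval : 2 * Real.sqrt (1 + (v/2) ^ 2) = Real.sqrt (4 + v ^ 2) := by
    rw [show (4 + v^2 : ℝ) = 2^2 * (1 + (v/2)^2) by ring,
      Real.sqrt_mul (by positivity), Real.sqrt_sq (by norm_num)]
  rw [← hval]
  exact hfinal.congr (fun L => (hcosh_eq L).symm)
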